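/- For every n ≥ 1 and all natural numbers a, b, c, d: #{σ ∈ S_n : inv(σ)=a, rmin(σ)=b, lmax(σ)=c, lmin(σ)=d} = #{σ ∈ S_n : sor(σ)=a, cyc(σ)=b, lmax(σ)=c, lmic1(σ)=d}; that is, the quadruples of statistics (inv, rmin, lmax, lmin) and (sor, cyc, lmax, lmic1) have the same joint distribution over S_n. -/

import Mathlib

open scoped Classical

namespace SortIdx

variable {n : ℕ}

noncomputable section

/-- The inversion number `inv σ := #{(i,j) : i < j ∧ σ i > σ j}`. -/
def inv (σ : Equiv.Perm (Fin n)) : ℕ :=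
  (Finset.univ.filter (fun p : Fin n × Fin n => p.1 < p.2 ∧ σ p.2 < σ p.1)).card

/-- The inversion set `Inv σ := {(i,j) : i < j ∧ σ i > σ j}`. -/
def InvSet (σ : Equiv.Perm (Fin n)) : Finset (Fin n × Fin n) :=
  Finset.univ.filter (fun p : Fin n × Fin n => p.1 < p.2 ∧ σ p.2 < σ p.1)

/-- Right-to-left minimum letters. -/
def RmilSet (σ : Equiv.Perm (Fin n)) : Finset (Fin n) :=
  (Finset.univ.filter (fun i => ∀ j, i < j → σ i < σ j)).image σ

/-- The number of right-to-left minima. -/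
def rmin (σ : Equiv.Perm (Fin n)) : ℕ := (RmilSet σ).card

/-- Right-to-left minimum places. -/
def RmipSet (σ : Equiv.Perm (Fin n)) : Finset (Fin n) :=
  Finset.univ.filter (fun i => ∀ j, i < j → σ i < σ j)

/-- Right-to-left maximum letters. -/
def RmalSet (σ : Equiv.Perm (Fin n)) : Finset (Fin n) :=
  (Finset.univ.filter (fun i => ∀ j, i < j → σ j < σ i)).image σ

/-- The number of right-to-left maxima. -/
def rmax (σ : Equiv.Perm (Fin n)) : ℕ := (RmalSet σ).card

/-- Left-to-right minimum letters. -/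
def LmilSet (σ : Equiv.Perm (Fin n)) : Finset (Fin n) :=
  (Finset.univ.filter (fun i => ∀ j, j < i → σ i < σ j)).image σ

/-- The number of left-to-right minima. -/
def lmin (σ : Equiv.Perm (Fin n)) : ℕ := (LmilSet σ).card

/-- Left-to-right minimum places. -/
def LmipSet (σ : Equiv.Perm (Fin n)) : Finset (Fin n) :=
  Finset.univ.filter (fun i => ∀ j, j < i → σ i < σ j)

/-- Left-to-right maximum letters. -/
def LmalSet (σ : Equiv.Perm (Fin n)) : Finset (Fin n) :=
  (Finset.univ.filter (fun i => ∀ j, j < i → σ j < σ i)).image σ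

/-- The number of left-to-right maxima. -/
def lmax (σ : Equiv.Perm (Fin n)) : ℕ := (LmalSet σ).card

/-- Left-to-right maximum places. -/
def LmapSet (σ : Equiv.Perm (Fin n)) : Finset (Fin n) :=
  Finset.univ.filter (fun i => ∀ j, j < i → σ j < σ i)

/-- `Cyc σ`: the set of smallest elements of the cycles of `σ`
(`i` is smallest in its cycle iff `i ≤ σ^k i` for all `k`). -/
def CycSet (σ : Equiv.Perm (Fin n)) : Finset (Fin n) :=
  Finset.univ.filter (fun i => ∀ k : ℕ, i ≤ (σ ^ k) i)

/-- The number of cycles of `σ` (fixed points included). -/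
def cyc (σ : Equiv.Perm (Fin n)) : ℕ := (CycSet σ).card

/-- One step of the sorting process computing the sorting index: repeatedly
put the largest not-yet-fixed letter `j` in its place by the transposition
`(i j)` where `i = σ⁻¹ j` is the place of the letter `j`, recording the
distance `j - i`.  This produces the unique factorization
`σ = (i₁ j₁)(i₂ j₂)⋯(i_k j_k)` with `j₁ < ⋯ < j_k`, `i_r < j_r`, and sums
the `j_r - i_r`.  The fuel `n` is always sufficient. -/
def sorAux : ℕ → Equiv.Perm (Fin n) → ℕ
  | 0, _ => 0
  | (fuel + 1), σ =>
    if h : σ.support.Nonempty then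
      (((σ.support.max' h : Fin n) : ℕ) - ((σ⁻¹ (σ.support.max' h) : Fin n) : ℕ)) +
        sorAux fuel (σ * Equiv.swap (σ⁻¹ (σ.support.max' h)) (σ.support.max' h))
    else 0

/-- The sorting index of Petersen. -/
def sor (σ : Equiv.Perm (Fin n)) : ℕ := sorAux n σ

theorem bcode_exists (σ : Equiv.Perm (Fin n)) (i : Fin n) :
    ∃ k : ℕ, 0 < k ∧ (σ⁻¹ ^ k) i ≤ i := by
  refine ⟨orderOf σ⁻¹, orderOf_pos σ⁻¹, ?_⟩
  rw [pow_orderOf_eq_one]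
  simp

/-- The `B`-code of `σ`: `Bcode σ i = σ^(-k) i` where `k ≥ 1` is minimal with
`σ^(-k) i ≤ i`. -/
def Bcode (σ : Equiv.Perm (Fin n)) (i : Fin n) : Fin n :=
  (σ⁻¹ ^ (Nat.find (bcode_exists σ i))) i

/-- The `B`-code as a sequence in `L_n` (1-indexed values: the entry at place
`i` is the 1-indexed name of the letter `Bcode σ i`). -/
def BcodeNat (σ : Equiv.Perm (Fin n)) : Fin n → ℕ :=
  fun i => ((Bcode σ i : Fin n) : ℕ) + 1

/-- The Lehmer code: `Leh σ i = #{j : j ≤ i ∧ σ j ≤ σ i}` (1-indexed values). -/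
def Leh (σ : Equiv.Perm (Fin n)) : Fin n → ℕ :=
  fun i => (Finset.univ.filter (fun j => j ≤ i ∧ σ j ≤ σ i)).card

/-- The `A`-code: `A σ := Leh σ⁻¹`. -/
def Acode (σ : Equiv.Perm (Fin n)) : Fin n → ℕ := Leh σ⁻¹

/-- `O(code) := {i : code i = 1}` (for `1`-indexed codes in `L_n`). -/
def Oset (code : Fin n → ℕ) : Finset (Fin n) :=
  Finset.univ.filter (fun i => code i = 1)

/-- `Lmic1 σ := O(B σ)`, the set of places where the `B`-code equals `1`,
equivalently the left-to-right minima of the shifted cycle containing `1`. -/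
def Lmic1Set (σ : Equiv.Perm (Fin n)) : Finset (Fin n) :=
  Oset (BcodeNat σ)

/-- `lmic1 σ := #{i : (B σ)_i = 1}`. -/
def lmic1 (σ : Equiv.Perm (Fin n)) : ℕ := (Lmic1Set σ).card

/-- The bijection `φ = B⁻¹ ∘ A` of Foata–Han. -/
def phi (σ : Equiv.Perm (Fin n)) : Equiv.Perm (Fin n) :=
  Function.invFun BcodeNat (Acode σ)

/-- The algorithm computing the induced set of a code: the list argument is
the list of places still to process (from the last to the first), `S` is the
set of letters still available.  At place `i` we pick the `(code i)`-th
smallest element `l` of `S` (1-indexed), put the pairs `(l, j)` for `j ∈ S`,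
`j > l` into the answer and remove `l` from `S`. -/
def inducedAux : List (Fin n) → Finset (Fin n) → (Fin n → ℕ) → Finset (Fin n × Fin n)
  | [], _, _ => ∅
  | (i :: is), S, code =>
      ((S.filter (fun j => (S.sort (· ≤ ·)).getD (code i - 1) i < j)).image
          (fun j => ((S.sort (· ≤ ·)).getD (code i - 1) i, j))) ∪
        inducedAux is (S.erase ((S.sort (· ≤ ·)).getD (code i - 1) i)) code

/-- The induced set `⟨code⟩` of a code in `L_n`. -/
def induced (code : Fin n → ℕ) : Finset (Fin n × Fin n) :=
  inducedAux (List.finRange n).reverse Finset.univ code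

/-- The sorting set `Sor σ := ⟨B σ⟩`. -/
def SorSet (σ : Equiv.Perm (Fin n)) : Finset (Fin n × Fin n) :=
  induced (BcodeNat σ)

/-- The descent set (as a set of places `i`, `0`-indexed, such that
`σ i > σ (i+1)`). -/
def DesSet (σ : Equiv.Perm (Fin n)) : Finset (Fin n) :=
  Finset.univ.filter (fun i => ∃ h : (i : ℕ) + 1 < n, σ ⟨(i : ℕ) + 1, h⟩ < σ i)

/-- The major index (descents being counted `1`-indexed). -/
def maj (σ : Equiv.Perm (Fin n)) : ℕ :=
  ∑ i ∈ DesSet σ, ((i : ℕ) + 1)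

/-- The charge `chg σ := ∑_{i ∈ Des σ⁻¹} (n - i)` (descents `1`-indexed). -/
def chg (σ : Equiv.Perm (Fin n)) : ℕ :=
  ∑ i ∈ DesSet σ⁻¹, (n - ((i : ℕ) + 1))

/-- The reverse-complement of `σ` : `τ i = n + 1 - σ (n + 1 - i)` (1-indexed). -/
def revcomp (σ : Equiv.Perm (Fin n)) : Equiv.Perm (Fin n) :=
  Fin.revPerm * σ * Fin.revPerm

/-- The reverse major index `rmaj σ := maj (revcomp σ)`. -/
def rmaj (σ : Equiv.Perm (Fin n)) : ℕ := maj (revcomp σ)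

end

end SortIdx

theorem Equiv.Perm.apply_inv_self {α : Type*} (f : Equiv.Perm α) (x : α) : f (f⁻¹ x) = x :=
  f.apply_symm_apply x

theorem Equiv.Perm.inv_apply_self {α : Type*} (f : Equiv.Perm α) (x : α) : f⁻¹ (f x) = x :=
  f.symm_apply_apply x

namespace SortIdx

open Finset Equiv

variable {n : ℕ}

noncomputable section

/-! ### The `A`-code (0-indexed) and code space -/

/-- `acard σ i = #{j < i : σ⁻¹ j < σ⁻¹ i}`. -/
def acard (σ : Equiv.Perm (Fin n)) (i : Fin n) : ℕ :=
  (univ.filter (fun j => j < i ∧ σ⁻¹ j < σ⁻¹ i)).card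

lemma card_filter_lt (i : Fin n) : (univ.filter (fun j : Fin n => j < i)).card = (i : ℕ) := by
  rw [← Fin.card_Iio (b := i)]
  congr 1
  ext j
  simp

lemma acard_le (σ : Equiv.Perm (Fin n)) (i : Fin n) : acard σ i ≤ (i : ℕ) := by
  rw [← card_filter_lt i]
  exact Finset.card_le_card (fun j hj => by
    simp only [Finset.mem_filter] at *
    exact ⟨hj.1, hj.2.1⟩)

/-- The `A`-code as a function `Fin n → Fin n`. -/
def Amap (σ : Equiv.Perm (Fin n)) : Fin n → Fin n :=
  fun i => ⟨acard σ i, lt_of_le_of_lt (acard_le σ i) i.isLt⟩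

/-- The code space: subexcedent functions. -/
def CS : Finset (Fin n → Fin n) := univ.filter (fun f => ∀ i, f i ≤ i)

/-- total of a code. -/
def ctot (f : Fin n → Fin n) : ℕ := ∑ i : Fin n, ((i : ℕ) - (f i : ℕ))

def cmaxSet (f : Fin n → Fin n) : Finset (Fin n) := univ.filter (fun i => f i = i)

def coneSet (f : Fin n → Fin n) : Finset (Fin n) := univ.filter (fun i => (f i : ℕ) = 0)

def clowSet (f : Fin n → Fin n) : Finset (Fin n) :=
  univ.filter (fun l => ∀ m, l < m → f l < f m)

lemma card_CS : (CS (n := n)).card = n.factorial := by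
  have e : {f : Fin n → Fin n // ∀ i, f i ≤ i} ≃ ((i : Fin n) → Fin ((i : ℕ) + 1)) :=
    { toFun := fun g i => ⟨(g.1 i : ℕ), Nat.lt_succ_of_le (Fin.le_def.mp (g.2 i))⟩
      invFun := fun h =>
        ⟨fun i => ⟨(h i : ℕ), lt_of_lt_of_le (h i).isLt (Nat.succ_le_of_lt i.isLt)⟩,
          fun i => Fin.le_def.mpr (Nat.lt_succ_iff.mp (h i).isLt)⟩
      left_inv := fun g => by
        apply Subtype.ext
        funext i
        apply Fin.ext
        rfl
      right_inv := fun h => by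
        funext i
        apply Fin.ext
        rfl }
  have h1 : (CS (n := n)).card = Fintype.card {f : Fin n → Fin n // ∀ i, f i ≤ i} := by
    rw [Fintype.card_subtype]
    apply Finset.card_bij (fun f _ => f)
    · intro f hf
      simp only [CS, Finset.mem_filter, Finset.mem_univ, true_and] at hf ⊢
      exact hf
    · intro f g _ _ h
      exact h
    · intro f hf
      simp only [CS, Finset.mem_filter, Finset.mem_univ, true_and] at hf ⊢
      exact ⟨f, hf, rfl⟩
  rw [h1, Fintype.card_congr e, Fintype.card_pi]
  simp only [Fintype.card_fin]
  rw [Fin.prod_univ_eq_prod_range (fun i => i + 1) n]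
  exact Finset.prod_range_add_one_eq_factorial n

/-! ### membership characterizations of the letter statistics -/

lemma mem_RmilSet_iff (σ : Equiv.Perm (Fin n)) (l : Fin n) :
    l ∈ RmilSet σ ↔ ∀ m, m < l → σ⁻¹ m < σ⁻¹ l := by
  unfold RmilSet
  simp only [Finset.mem_image, Finset.mem_filter, Finset.mem_univ, true_and]
  constructor
  · rintro ⟨p, hp, rfl⟩ m hm
    rcases lt_trichotomy (σ⁻¹ m) (σ⁻¹ (σ p)) with h|h|h
    · exact h
    · exact absurd (σ⁻¹.injective h) hm.ne
    · rw [Equiv.Perm.inv_apply_self] at h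
      have := hp (σ⁻¹ m) h
      rw [Equiv.Perm.apply_inv_self] at this
      exact absurd this (not_lt.mpr hm.le)
  · intro h
    refine ⟨σ⁻¹ l, fun q hq => ?_, by simp⟩
    rw [Equiv.Perm.apply_inv_self]
    rcases lt_trichotomy l (σ q) with h2|h2|h2
    · exact h2
    · exact absurd (by rw [h2, Equiv.Perm.inv_apply_self]) hq.ne
    · have := h (σ q) h2
      rw [Equiv.Perm.inv_apply_self] at this
      exact absurd hq (not_lt.mpr this.le)

lemma mem_LmilSet_iff (σ : Equiv.Perm (Fin n)) (l : Fin n) :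
    l ∈ LmilSet σ ↔ ∀ m, m < l → σ⁻¹ l < σ⁻¹ m := by
  unfold LmilSet
  simp only [Finset.mem_image, Finset.mem_filter, Finset.mem_univ, true_and]
  constructor
  · rintro ⟨p, hp, rfl⟩ m hm
    rcases lt_trichotomy (σ⁻¹ (σ p)) (σ⁻¹ m) with h|h|h
    · exact h
    · exact absurd (σ⁻¹.injective h).symm hm.ne
    · rw [Equiv.Perm.inv_apply_self] at h
      have := hp (σ⁻¹ m) h
      rw [Equiv.Perm.apply_inv_self] at this
      exact absurd this (not_lt.mpr hm.le)
  · intro h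
    refine ⟨σ⁻¹ l, fun q hq => ?_, by simp⟩
    rw [Equiv.Perm.apply_inv_self]
    rcases lt_trichotomy l (σ q) with h2|h2|h2
    · exact h2
    · exact absurd (by rw [h2, Equiv.Perm.inv_apply_self]) hq.ne'
    · have := h (σ q) h2
      rw [Equiv.Perm.inv_apply_self] at this
      exact absurd hq (not_lt.mpr this.le)

lemma mem_LmalSet_iff (σ : Equiv.Perm (Fin n)) (l : Fin n) :
    l ∈ LmalSet σ ↔ ∀ m, l < m → σ⁻¹ l < σ⁻¹ m := by
  unfold LmalSet
  simp only [Finset.mem_image, Finset.mem_filter, Finset.mem_univ, true_and]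
  constructor
  · rintro ⟨p, hp, rfl⟩ m hm
    rcases lt_trichotomy (σ⁻¹ (σ p)) (σ⁻¹ m) with h|h|h
    · exact h
    · exact absurd (σ⁻¹.injective h) hm.ne
    · rw [Equiv.Perm.inv_apply_self] at h
      have := hp (σ⁻¹ m) h
      rw [Equiv.Perm.apply_inv_self] at this
      exact absurd this (not_lt.mpr hm.le)
  · intro h
    refine ⟨σ⁻¹ l, fun q hq => ?_, by simp⟩
    rw [Equiv.Perm.apply_inv_self]
    rcases lt_trichotomy (σ q) l with h2|h2|h2
    · exact h2
    · exact absurd (by rw [← h2, Equiv.Perm.inv_apply_self]) hq.ne'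
    · have := h (σ q) h2
      rw [Equiv.Perm.inv_apply_self] at this
      exact absurd hq (not_lt.mpr this.le)

/-! ### A-side statistics -/

lemma inv_eq_inv_inv (σ : Equiv.Perm (Fin n)) : inv σ = inv σ⁻¹ := by
  unfold inv
  refine Finset.card_bij' (fun p _ => (σ p.2, σ p.1)) (fun q _ => (σ⁻¹ q.2, σ⁻¹ q.1))
    ?_ ?_ ?_ ?_
  · intro p hp
    obtain ⟨-, hp1, hp2⟩ := Finset.mem_filter.mp hp
    refine Finset.mem_filter.mpr ⟨Finset.mem_univ _, hp2, ?_⟩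
    simpa using hp1
  · intro q hq
    obtain ⟨-, hq1, hq2⟩ := Finset.mem_filter.mp hq
    refine Finset.mem_filter.mpr ⟨Finset.mem_univ _, hq2, ?_⟩
    simpa using hq1
  · intro p _; simp
  · intro q _; simp

lemma card_compl_acard (σ : Equiv.Perm (Fin n)) (i : Fin n) :
    (univ.filter (fun j => j < i ∧ σ⁻¹ i < σ⁻¹ j)).card = (i : ℕ) - acard σ i := by
  have hset : (univ.filter (fun j => j < i ∧ σ⁻¹ i < σ⁻¹ j)) =
      SDiff.sdiff (univ.filter (fun j : Fin n => j < i))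
        (univ.filter (fun j => j < i ∧ σ⁻¹ j < σ⁻¹ i)) := by
    ext j
    simp only [Finset.mem_filter, Finset.mem_sdiff, Finset.mem_univ, true_and]
    constructor
    · rintro ⟨h1, h2⟩
      exact ⟨h1, fun hc => lt_asymm h2 hc.2⟩
    · rintro ⟨h1, h2⟩
      refine ⟨h1, ?_⟩
      have hne : σ⁻¹ i ≠ σ⁻¹ j := fun he => h1.ne' (σ⁻¹.injective he)
      have hnlt : ¬ σ⁻¹ j < σ⁻¹ i := fun hc => h2 ⟨h1, hc⟩
      exact lt_of_le_of_ne (not_lt.mp hnlt) hne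
  rw [hset, Finset.card_sdiff_of_subset (fun j hj =>
    Finset.mem_filter.mpr ⟨Finset.mem_univ _, (Finset.mem_filter.mp hj).2.1⟩), card_filter_lt]
  rfl

lemma inv_eq_ctot_Amap (σ : Equiv.Perm (Fin n)) : inv σ = ctot (Amap σ) := by
  rw [inv_eq_inv_inv]
  unfold inv ctot
  rw [Finset.card_eq_sum_card_fiberwise
    (f := fun p : Fin n × Fin n => p.2) (t := univ) (fun p _ => Finset.mem_univ _)]
  refine Finset.sum_congr rfl (fun i _ => ?_)
  have hfib : ((univ.filter
        (fun p : Fin n × Fin n => p.1 < p.2 ∧ σ⁻¹ p.2 < σ⁻¹ p.1)).filter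
        (fun p => p.2 = i)).card
      = (univ.filter (fun j => j < i ∧ σ⁻¹ i < σ⁻¹ j)).card := by
    refine Finset.card_bij' (fun p _ => p.1) (fun j _ => (j, i)) ?_ ?_ ?_ ?_
    · intro p hp
      simp only [Finset.mem_filter, Finset.mem_univ, true_and] at hp ⊢
      obtain ⟨⟨h1, h2⟩, h3⟩ := hp
      subst h3
      exact ⟨h1, h2⟩
    · intro j hj
      simp only [Finset.mem_filter, Finset.mem_univ, true_and] at hj
      exact Finset.mem_filter.mpr
        ⟨Finset.mem_filter.mpr ⟨Finset.mem_univ _, hj.1, hj.2⟩, rfl⟩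
    · intro p hp
      simp only [Finset.mem_filter] at hp
      exact Prod.ext rfl hp.2.symm
    · intro j _
      rfl
  rw [hfib, card_compl_acard]
  rfl

lemma rmin_eq_cmax_Amap (σ : Equiv.Perm (Fin n)) : rmin σ = (cmaxSet (Amap σ)).card := by
  unfold rmin
  congr 1
  ext l
  rw [mem_RmilSet_iff]
  simp only [cmaxSet, Finset.mem_filter, Finset.mem_univ, true_and]
  constructor
  · intro h
    have hval : acard σ l = (l : ℕ) := by
      unfold acard
      rw [Finset.filter_congr (q := fun j : Fin n => j < l) (fun j _ => by
        constructor
        · exact fun hj => hj.1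
        · exact fun hj => ⟨hj, h j hj⟩)]
      exact card_filter_lt l
    exact Fin.ext hval
  · intro hA m hm
    have hval : acard σ l = (l : ℕ) := congrArg Fin.val hA
    by_contra hc
    have hss : (univ.filter (fun j => j < l ∧ σ⁻¹ j < σ⁻¹ l)) ⊂
        (univ.filter (fun j : Fin n => j < l)) := by
      refine (Finset.ssubset_iff_of_subset (fun j hj => ?_)).mpr ⟨m, ?_, ?_⟩
      · exact Finset.mem_filter.mpr ⟨Finset.mem_univ _, (Finset.mem_filter.mp hj).2.1⟩
      · exact Finset.mem_filter.mpr ⟨Finset.mem_univ _, hm⟩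
      · intro hmem
        exact hc (Finset.mem_filter.mp hmem).2.2
    have := Finset.card_lt_card hss
    rw [card_filter_lt] at this
    exact absurd hval (Nat.ne_of_lt this)

lemma lmin_eq_cone_Amap (σ : Equiv.Perm (Fin n)) : lmin σ = (coneSet (Amap σ)).card := by
  unfold lmin
  congr 1
  ext l
  rw [mem_LmilSet_iff]
  simp only [coneSet, Finset.mem_filter, Finset.mem_univ, true_and]
  show _ ↔ acard σ l = 0
  unfold acard
  rw [Finset.card_eq_zero, Finset.filter_eq_empty_iff]
  constructor
  · rintro h j - ⟨hj1, hj2⟩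
    exact absurd hj2 (lt_asymm (h j hj1))
  · intro h m hm
    have h1 : ¬ (σ⁻¹ m < σ⁻¹ l) := fun hc => h (Finset.mem_univ m) ⟨hm, hc⟩
    have h2 : σ⁻¹ l ≠ σ⁻¹ m := fun he => hm.ne' (σ⁻¹.injective he)
    exact lt_of_le_of_ne (not_lt.mp h1) h2

lemma lmax_eq_clow_Amap (σ : Equiv.Perm (Fin n)) : lmax σ = (clowSet (Amap σ)).card := by
  unfold lmax
  congr 1
  ext l
  rw [mem_LmalSet_iff]
  simp only [clowSet, Finset.mem_filter, Finset.mem_univ, true_and]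
  constructor
  · intro h m hm
    rw [Fin.lt_def]
    show acard σ l < acard σ m
    have hsub : insert l (univ.filter (fun j => j < l ∧ σ⁻¹ j < σ⁻¹ l)) ⊆
        univ.filter (fun j => j < m ∧ σ⁻¹ j < σ⁻¹ m) := by
      intro x hx
      rcases Finset.mem_insert.mp hx with rfl | hx
      · exact Finset.mem_filter.mpr ⟨Finset.mem_univ _, hm, h m hm⟩
      · obtain ⟨-, hx1, hx2⟩ := Finset.mem_filter.mp hx
        exact Finset.mem_filter.mpr ⟨Finset.mem_univ _, hx1.trans hm, hx2.trans (h m hm)⟩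
    have hle := Finset.card_le_card hsub
    rw [Finset.card_insert_of_notMem (by simp)] at hle
    exact lt_of_lt_of_le (Nat.lt_succ_self _) hle
  · intro h m hm
    by_contra hc
    have hS : (univ.filter (fun x => l < x ∧ σ⁻¹ x < σ⁻¹ l)).Nonempty := by
      refine ⟨m, Finset.mem_filter.mpr ⟨Finset.mem_univ _, hm, ?_⟩⟩
      exact lt_of_le_of_ne (not_lt.mp hc) (fun he => hm.ne' (σ⁻¹.injective he))
    obtain ⟨-, hlm0, hinv0⟩ := Finset.mem_filter.mp
      ((univ.filter (fun x => l < x ∧ σ⁻¹ x < σ⁻¹ l)).min'_mem hS)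
    have hmono : (univ.filter (fun j =>
          j < (univ.filter (fun x => l < x ∧ σ⁻¹ x < σ⁻¹ l)).min' hS ∧
          σ⁻¹ j < σ⁻¹ ((univ.filter (fun x => l < x ∧ σ⁻¹ x < σ⁻¹ l)).min' hS))) ⊆
        univ.filter (fun j => j < l ∧ σ⁻¹ j < σ⁻¹ l) := by
      intro x hx
      obtain ⟨-, hx1, hx2⟩ := Finset.mem_filter.mp hx
      have hxl : x < l := by
        rcases lt_trichotomy x l with h1|h1|h1
        · exact h1
        · subst h1
          exact absurd hx2 (lt_asymm hinv0)
        · have hxS : x ∈ univ.filter (fun x => l < x ∧ σ⁻¹ x < σ⁻¹ l) :=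
            Finset.mem_filter.mpr ⟨Finset.mem_univ _, h1, hx2.trans hinv0⟩
          exact absurd (Finset.min'_le _ x hxS) (not_le.mpr hx1)
      exact Finset.mem_filter.mpr ⟨Finset.mem_univ _, hxl, hx2.trans hinv0⟩
    have hcard := Finset.card_le_card hmono
    have hlt := h _ hlm0
    rw [Fin.lt_def] at hlt
    exact absurd hlt (not_lt.mpr hcard)

lemma Amap_injective : Function.Injective (Amap (n := n)) := by
  intro σ τ h
  have ha : ∀ i, acard σ i = acard τ i := fun i => congrArg Fin.val (congrFun h i)
  have rank : ∀ (π : Equiv.Perm (Fin n)) (i j : Fin n), j < i →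
      (π⁻¹ j < π⁻¹ i ↔
        (univ.filter (fun k => k < i ∧ π⁻¹ k ≤ π⁻¹ j)).card ≤ acard π i) := by
    intro π i j hj
    constructor
    · intro h2
      apply Finset.card_le_card
      intro k hk
      obtain ⟨-, hk1, hk2⟩ := Finset.mem_filter.mp hk
      exact Finset.mem_filter.mpr ⟨Finset.mem_univ _, hk1, lt_of_le_of_lt hk2 h2⟩
    · intro h2
      by_contra hc
      have hij : π⁻¹ i < π⁻¹ j := by
        have hne : π⁻¹ i ≠ π⁻¹ j := fun he => hj.ne' (π⁻¹.injective he)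
        exact lt_of_le_of_ne (not_lt.mp hc) hne
      have hss : (univ.filter (fun k => k < i ∧ π⁻¹ k < π⁻¹ i)) ⊂
          (univ.filter (fun k => k < i ∧ π⁻¹ k ≤ π⁻¹ j)) := by
        refine (Finset.ssubset_iff_of_subset (fun k hk => ?_)).mpr ⟨j, ?_, ?_⟩
        · obtain ⟨-, hk1, hk2⟩ := Finset.mem_filter.mp hk
          exact Finset.mem_filter.mpr ⟨Finset.mem_univ _, hk1, (hk2.trans hij).le⟩
        · exact Finset.mem_filter.mpr ⟨Finset.mem_univ _, hj, le_refl _⟩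
        · intro hmem
          exact lt_asymm hij (Finset.mem_filter.mp hmem).2.2
      exact absurd h2 (not_le.mpr (Finset.card_lt_card hss))
  have key : ∀ N : ℕ, ∀ i : Fin n, (i : ℕ) ≤ N → ∀ j, j < i →
      (σ⁻¹ j < σ⁻¹ i ↔ τ⁻¹ j < τ⁻¹ i) := by
    intro N
    induction N with
    | zero =>
      intro i hi j hj
      have := Fin.lt_def.mp hj
      omega
    | succ N IH =>
      intro i hi j hj
      by_cases hiN : (i : ℕ) ≤ N
      · exact IH i hiN j hj
      have comp : ∀ a b : Fin n, (a : ℕ) ≤ N → (b : ℕ) ≤ N →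
          (σ⁻¹ a < σ⁻¹ b ↔ τ⁻¹ a < τ⁻¹ b) := by
        intro a b haN hbN
        rcases lt_trichotomy a b with hab|rfl|hab
        · exact IH b hbN a hab
        · simp
        · have h1 := IH a haN b hab
          constructor
          · intro h2
            rcases lt_trichotomy (τ⁻¹ a) (τ⁻¹ b) with h3|h3|h3
            · exact h3
            · exact absurd (τ⁻¹.injective h3) hab.ne'
            · exact absurd (h1.mpr h3) (lt_asymm h2)
          · intro h2
            rcases lt_trichotomy (σ⁻¹ a) (σ⁻¹ b) with h3|h3|h3
            · exact h3
            · exact absurd (σ⁻¹.injective h3) hab.ne'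
            · exact absurd (h1.mp h3) (lt_asymm h2)
      have hlt : ∀ k : Fin n, k < i → (k : ℕ) ≤ N := by
        intro k hk
        have h1 := Fin.lt_def.mp hk
        omega
      have hrr : (univ.filter (fun k => k < i ∧ σ⁻¹ k ≤ σ⁻¹ j)) =
          (univ.filter (fun k => k < i ∧ τ⁻¹ k ≤ τ⁻¹ j)) := by
        apply Finset.filter_congr
        intro k _
        have hiff : (σ⁻¹ k < σ⁻¹ j ↔ τ⁻¹ k < τ⁻¹ j) → (k < i → ((σ⁻¹ k ≤ σ⁻¹ j) ↔ (τ⁻¹ k ≤ τ⁻¹ j))) := by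
          intro hkj hki
          rcases eq_or_ne k j with rfl | hne
          · simp
          constructor
          · intro hle
            exact (hkj.mp (lt_of_le_of_ne hle (fun he => hne (σ⁻¹.injective he)))).le
          · intro hle
            exact (hkj.mpr (lt_of_le_of_ne hle (fun he => hne (τ⁻¹.injective he)))).le
        constructor
        · rintro ⟨hk1, hk2⟩
          exact ⟨hk1, (hiff (comp k j (hlt k hk1) (hlt j hj)) hk1).mp hk2⟩
        · rintro ⟨hk1, hk2⟩
          exact ⟨hk1, (hiff (comp k j (hlt k hk1) (hlt j hj)) hk1).mpr hk2⟩
      rw [rank σ i j hj, rank τ i j hj, hrr, ha i]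
  have full : ∀ i j : Fin n, σ⁻¹ j < σ⁻¹ i ↔ τ⁻¹ j < τ⁻¹ i := by
    intro i j
    rcases lt_trichotomy j i with hji|rfl|hji
    · exact key (i : ℕ) i le_rfl j hji
    · simp
    · have h1 := key (j : ℕ) j le_rfl i hji
      constructor
      · intro h2
        rcases lt_trichotomy (τ⁻¹ j) (τ⁻¹ i) with h3|h3|h3
        · exact h3
        · exact absurd (τ⁻¹.injective h3) hji.ne'
        · exact absurd (h1.mpr h3) (lt_asymm h2)
      · intro h2
        rcases lt_trichotomy (σ⁻¹ j) (σ⁻¹ i) with h3|h3|h3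
        · exact h3
        · exact absurd (σ⁻¹.injective h3) hji.ne'
        · exact absurd (h1.mp h3) (lt_asymm h2)
  have hu : StrictMono (fun x => τ⁻¹ (σ x)) := by
    intro a b hab
    refine (full (σ b) (σ a)).mp ?_
    simpa using hab
  have hrange : Set.range (fun x => τ⁻¹ (σ x)) = Set.range (id : Fin n → Fin n) := by
    rw [Set.range_id, Set.range_eq_univ]
    exact fun y => ⟨σ⁻¹ (τ y), by simp⟩
  haveI : WellFoundedLT (Fin n) := inferInstance
  have hid := (hu.range_inj (show StrictMono (id : Fin n → Fin n) from fun _ _ h => h)).mp hrange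
  ext x
  have := congrFun hid x
  simp only [id_eq] at this
  have h2 := congrArg τ this
  simp only [Equiv.Perm.apply_inv_self] at h2
  exact congrArg Fin.val h2

lemma Amap_mem_CS (σ : Equiv.Perm (Fin n)) : Amap σ ∈ CS := by
  refine Finset.mem_filter.mpr ⟨Finset.mem_univ _, fun i => ?_⟩
  exact Fin.le_def.mpr (acard_le σ i)

/-! ### B-code basics -/

lemma Bcode_le (σ : Equiv.Perm (Fin n)) (i : Fin n) : Bcode σ i ≤ i :=
  (Nat.find_spec (bcode_exists σ i)).2

lemma Bcode_eq_iff (σ : Equiv.Perm (Fin n)) (i c : Fin n) :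
    Bcode σ i = c ↔
      ∃ k, 0 < k ∧ (σ⁻¹ ^ k) i = c ∧ c ≤ i ∧ ∀ r, 0 < r → r < k → i < (σ⁻¹ ^ r) i := by
  constructor
  · rintro rfl
    refine ⟨Nat.find (bcode_exists σ i), (Nat.find_spec (bcode_exists σ i)).1, rfl,
      (Nat.find_spec (bcode_exists σ i)).2, ?_⟩
    intro r hr hrk
    have hmin := Nat.find_min (bcode_exists σ i) hrk
    push_neg at hmin
    exact hmin hr
  · rintro ⟨k, hk, hkc, hci, hmin⟩
    have hfind : Nat.find (bcode_exists σ i) = k := by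
      rw [Nat.find_eq_iff]
      refine ⟨⟨hk, ?_⟩, ?_⟩
      · rw [hkc]; exact hci
      · rintro m hm ⟨hm0, hmle⟩
        exact absurd hmle (not_le.mpr (hmin m hm0 hm))
    unfold Bcode
    rw [hfind, hkc]

lemma Bcode_spec (σ : Equiv.Perm (Fin n)) (i : Fin n) :
    ∃ k, 0 < k ∧ (σ⁻¹ ^ k) i = Bcode σ i ∧ ∀ r, 0 < r → r < k → i < (σ⁻¹ ^ r) i :=
  let h := (Bcode_eq_iff σ i (Bcode σ i)).mp rfl
  ⟨h.choose, h.choose_spec.1, h.choose_spec.2.1, h.choose_spec.2.2.2⟩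

lemma Bcode_of_fixed (σ : Equiv.Perm (Fin n)) (i : Fin n) (h : σ i = i) : Bcode σ i = i := by
  rw [Bcode_eq_iff]
  refine ⟨1, one_pos, ?_, le_refl _, fun r h1 h2 => absurd (lt_of_lt_of_le h1 (Nat.lt_succ_iff.mp h2)) (lt_irrefl 0)⟩
  rw [pow_one]
  exact Equiv.Perm.inv_eq_iff_eq.mpr h.symm

lemma Bcode_inv_apply (σ : Equiv.Perm (Fin n)) (i : Fin n) (h : σ⁻¹ i ≤ i) :
    Bcode σ i = σ⁻¹ i := by
  rw [Bcode_eq_iff]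
  exact ⟨1, one_pos, by rw [pow_one], h,
    fun r h1 h2 => absurd (lt_of_lt_of_le h1 (Nat.lt_succ_iff.mp h2)) (lt_irrefl 0)⟩

lemma support_of_Bcode_lt (σ : Equiv.Perm (Fin n)) (i : Fin n) (h : Bcode σ i < i) :
    i ∈ σ.support := by
  by_contra hc
  rw [Equiv.Perm.notMem_support] at hc
  rw [Bcode_of_fixed σ i hc] at h
  exact lt_irrefl _ h

/-! ### the sorting step -/

section Step

variable (σ : Equiv.Perm (Fin n)) (hs : σ.support.Nonempty)

local notation "J" => σ.support.max' hs

lemma step_lt : σ⁻¹ J < J := by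
  have hJ : J ∈ σ.support := σ.support.max'_mem hs
  rw [Equiv.Perm.mem_support] at hJ
  have hne : σ⁻¹ J ≠ J := by
    intro he
    have h3 := congrArg σ he
    rw [Equiv.Perm.apply_inv_self] at h3
    exact hJ h3.symm
  have h1 : σ⁻¹ J ∈ σ.support := by
    rw [Equiv.Perm.mem_support, Equiv.Perm.apply_inv_self]
    exact fun he => hne he.symm
  exact lt_of_le_of_ne (Finset.le_max' _ _ h1) hne

lemma step_sigma'_apply_max : (σ * Equiv.swap (σ⁻¹ J) J) J = J := by
  rw [Equiv.Perm.mul_apply, Equiv.swap_apply_right, Equiv.Perm.apply_inv_self]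

lemma step_support_subset :
    (σ * Equiv.swap (σ⁻¹ J) J).support ⊆ σ.support.erase J := by
  intro x hx
  rw [Equiv.Perm.mem_support] at hx
  have hxJ : x ≠ J := by
    rintro rfl
    exact hx (step_sigma'_apply_max σ hs)
  refine Finset.mem_erase.mpr ⟨hxJ, Equiv.Perm.mem_support.mpr ?_⟩
  rcases eq_or_ne x (σ⁻¹ J) with rfl | hxi
  · rw [Equiv.Perm.apply_inv_self]
    exact (step_lt σ hs).ne'
  · intro hc
    apply hx
    rw [Equiv.Perm.mul_apply, Equiv.swap_apply_of_ne_of_ne hxi hxJ, hc]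

lemma step_Bcode_max : Bcode σ J = σ⁻¹ J :=
  Bcode_inv_apply σ _ (step_lt σ hs).le

lemma step_Bcode_max' : Bcode (σ * Equiv.swap (σ⁻¹ J) J) J = J :=
  Bcode_of_fixed _ _ (step_sigma'_apply_max σ hs)

lemma step_Bcode_eq (m : Fin n) (hm : m ≠ J) :
    Bcode (σ * Equiv.swap (σ⁻¹ J) J) m = Bcode σ m := by
  have hij : σ⁻¹ J < J := step_lt σ hs
  have hinv' : ∀ x : Fin n,
      (σ * Equiv.swap (σ⁻¹ J) J)⁻¹ x = Equiv.swap (σ⁻¹ J) J (σ⁻¹ x) := by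
    intro x
    rw [mul_inv_rev, Equiv.Perm.mul_apply, Equiv.swap_inv]
  rcases lt_or_gt_of_ne hm with hmJ | hmJ
  swap
  · have h1 : σ m = m := by
      by_contra hc
      exact absurd (Finset.le_max' _ m (Equiv.Perm.mem_support.mpr hc)) (not_le.mpr hmJ)
    have h2 : (σ * Equiv.swap (σ⁻¹ J) J) m = m := by
      rw [Equiv.Perm.mul_apply,
        Equiv.swap_apply_of_ne_of_ne (fun he => absurd hmJ (by rw [he]; exact not_lt.mpr hij.le)) hm, h1]
    rw [Bcode_of_fixed _ _ h2, Bcode_of_fixed _ _ h1]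
  · obtain ⟨k, hk0, hkB, hmin⟩ := Bcode_spec σ m
    set x : ℕ → Fin n := fun r => (σ⁻¹ ^ r) m with hx
    have hkB' : x k = Bcode σ m := hkB
    have hmin' : ∀ r, 0 < r → r < k → m < x r := hmin
    have hx0 : x 0 = m := by simp [hx, Equiv.Perm.one_symm]
    have hxs : ∀ r, x (r + 1) = σ⁻¹ (x r) := by
      intro r
      simp only [hx, pow_succ', Equiv.Perm.mul_apply]
    have hσx : ∀ r, σ (x (r + 1)) = x r := by
      intro r
      rw [hxs r, Equiv.Perm.apply_inv_self]
    have hdist : ∀ r t, 1 ≤ r → r < t → t ≤ k → x r ≠ x t := by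
      intro r t h1 h2 h3 he
      have ht : x t = (σ⁻¹ ^ r) (x (t - r)) := by
        simp only [hx, ← Equiv.Perm.mul_apply, ← pow_add]
        congr 2
        omega
      rw [ht] at he
      have hinj : x r = (σ⁻¹ ^ r) m := rfl
      rw [hinj] at he
      have hme := (Equiv.injective ((σ⁻¹ : Equiv.Perm (Fin n)) ^ r)) he
      have hme' : m = x (t - r) := hme
      have h4 := hmin' (t - r) (by omega) (by omega)
      rw [← hme'] at h4
      exact lt_irrefl _ h4
    have huniq : ∀ s' r, 1 ≤ s' → s' ≤ k → x s' = J → 1 ≤ r → r ≤ k → x r = J → r = s' := by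
      intro s' r hs1 hs2 hsJ hr1 hr2 hrJ
      by_contra hne
      rcases lt_or_gt_of_ne hne with h|h
      · exact hdist r s' hr1 h hs2 (hrJ.trans hsJ.symm)
      · exact hdist s' r hs1 h hr2 (hsJ.trans hrJ.symm)
    by_cases hJocc : ∃ s', 1 ≤ s' ∧ s' < k ∧ x s' = J
    · obtain ⟨s', hs1, hsk, hsJ⟩ := hJocc
      have hxsi : x (s' + 1) = σ⁻¹ J := by rw [hxs s', hsJ]
      set y : ℕ → Fin n := fun r => if r < s' then x r else x (r + 1) with hy
      have heq : ∀ r, r ≤ k - 1 → ((σ * Equiv.swap (σ⁻¹ J) J)⁻¹ ^ r) m = y r := by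
        intro r
        induction r with
        | zero =>
          intro _
          simp only [pow_zero, Equiv.Perm.one_apply, hy]
          rw [if_pos (by omega), hx0]
        | succ r IH =>
          intro hrk
          rw [pow_succ', Equiv.Perm.mul_apply, IH (by omega), hinv']
          rcases lt_trichotomy (r + 1) s' with hlt|heqs|hgt
          · rw [show y r = x r from if_pos (by omega), ← hxs r,
              show y (r + 1) = x (r + 1) from if_pos hlt]
            apply Equiv.swap_apply_of_ne_of_ne
            · intro he
              have hxr : x r = J := by rw [← hσx r, he, Equiv.Perm.apply_inv_self]
              rcases Nat.eq_zero_or_pos r with rfl|hr0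
              · exact hm (hx0 ▸ hxr)
              · have := huniq s' r hs1 hsk.le hsJ hr0 (by omega) hxr
                omega
            · intro he
              have := huniq s' (r + 1) hs1 hsk.le hsJ (by omega) (by omega) he
              omega
          · rw [show y r = x r from if_pos (by omega), ← hxs r,
              show x (r + 1) = J from heqs ▸ hsJ, Equiv.swap_apply_right,
              show y (r + 1) = x (r + 1 + 1) from if_neg (by omega),
              show r + 1 + 1 = s' + 1 by omega, hxsi]
          · rw [show y r = x (r + 1) from if_neg (by omega), ← hxs (r + 1),
              show y (r + 1) = x (r + 1 + 1) from if_neg (by omega)]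
            apply Equiv.swap_apply_of_ne_of_ne
            · intro he
              have hxr : x (r + 1) = J := by
                rw [← hσx (r + 1), he, Equiv.Perm.apply_inv_self]
              have := huniq s' (r + 1) hs1 hsk.le hsJ (by omega) (by omega) hxr
              omega
            · intro he
              have := huniq s' (r + 1 + 1) hs1 hsk.le hsJ (by omega) (by omega) he
              omega
      rw [(Bcode_eq_iff _ m (Bcode σ m)).mpr ?_]
      refine ⟨k - 1, by omega, ?_, Bcode_le σ m, ?_⟩
      · rw [heq (k - 1) le_rfl, show y (k - 1) = x (k - 1 + 1) from if_neg (by omega),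
          show k - 1 + 1 = k by omega, hkB']
      · intro r hr0 hrk
        rw [heq r (by omega)]
        by_cases hrs : r < s'
        · rw [show y r = x r from if_pos hrs]
          exact hmin' r hr0 (by omega)
        · rw [show y r = x (r + 1) from if_neg hrs]
          exact hmin' (r + 1) (by omega) (by omega)
    · push_neg at hJocc
      have heq : ∀ r, r ≤ k → ((σ * Equiv.swap (σ⁻¹ J) J)⁻¹ ^ r) m = x r := by
        intro r
        induction r with
        | zero =>
          intro _
          simp only [pow_zero, Equiv.Perm.one_apply, hx0]
        | succ r IH =>
          intro hrk
          rw [pow_succ', Equiv.Perm.mul_apply, IH (by omega), hinv', ← hxs r]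
          apply Equiv.swap_apply_of_ne_of_ne
          · intro he
            have hxr : x r = J := by rw [← hσx r, he, Equiv.Perm.apply_inv_self]
            rcases Nat.eq_zero_or_pos r with rfl|hr0
            · exact hm (hx0 ▸ hxr)
            · exact hJocc r hr0 (by omega) hxr
          · intro he
            rcases Nat.lt_or_ge (r + 1) k with h|h
            · exact hJocc (r + 1) (by omega) h he
            · have hrk' : r + 1 = k := le_antisymm hrk h
              rw [hrk', hkB'] at he
              have hle := Bcode_le σ m
              rw [he] at hle
              exact absurd hmJ (not_lt.mpr hle)
      rw [(Bcode_eq_iff _ m (Bcode σ m)).mpr ?_]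
      refine ⟨k, hk0, ?_, Bcode_le σ m, ?_⟩
      · rw [heq k le_rfl, hkB']
      · intro r hr0 hrk
        rw [heq r (by omega)]
        exact hmin' r hr0 hrk

end Step

/-! ### B-side statistics -/

lemma sorAux_eq (fuel : ℕ) : ∀ σ : Equiv.Perm (Fin n), σ.support.card ≤ fuel →
    sorAux fuel σ = ∑ i : Fin n, ((i : ℕ) - (Bcode σ i : ℕ)) := by
  induction fuel with
  | zero =>
    intro σ hσ
    have hσ1 : σ = 1 := by
      rw [← Equiv.Perm.support_eq_empty_iff]
      exact Finset.card_eq_zero.mp (le_antisymm hσ (Nat.zero_le _))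
    subst hσ1
    rw [sorAux]
    symm
    apply Finset.sum_eq_zero
    intro i _
    rw [Bcode_of_fixed 1 i (Equiv.Perm.one_apply i), Nat.sub_self]
  | succ fuel IH =>
    intro σ hσ
    rw [sorAux]
    by_cases hns : σ.support.Nonempty
    · rw [dif_pos hns]
      have hsub := step_support_subset σ hns
      have hcard : (σ * Equiv.swap (σ⁻¹ (σ.support.max' hns)) (σ.support.max' hns)).support.card
          ≤ fuel := by
        have h1 := Finset.card_le_card hsub
        have h2 : (σ.support.erase (σ.support.max' hns)).card < σ.support.card :=
          Finset.card_erase_lt_of_mem (σ.support.max'_mem hns)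
        omega
      rw [IH _ hcard]
      have e1 : ∑ i : Fin n, ((i : ℕ) -
            ((Bcode (σ * Equiv.swap (σ⁻¹ (σ.support.max' hns)) (σ.support.max' hns)) i : Fin n) : ℕ))
          = ∑ i ∈ univ.erase (σ.support.max' hns), ((i : ℕ) - ((Bcode σ i : Fin n) : ℕ)) := by
        rw [← Finset.add_sum_erase _ _ (Finset.mem_univ (σ.support.max' hns)),
          step_Bcode_max' σ hns, Nat.sub_self, zero_add]
        apply Finset.sum_congr rfl
        intro m hm
        rw [step_Bcode_eq σ hns m (Finset.mem_erase.mp hm).1]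
      have e2 : ∑ i : Fin n, ((i : ℕ) - ((Bcode σ i : Fin n) : ℕ))
          = (((σ.support.max' hns) : ℕ) - ((σ⁻¹ (σ.support.max' hns) : Fin n) : ℕ))
            + ∑ i ∈ univ.erase (σ.support.max' hns), ((i : ℕ) - ((Bcode σ i : Fin n) : ℕ)) := by
        rw [← Finset.add_sum_erase _ _ (Finset.mem_univ (σ.support.max' hns)),
          step_Bcode_max σ hns]
      rw [e1, e2]
    · rw [dif_neg hns]
      rw [Finset.not_nonempty_iff_eq_empty, Equiv.Perm.support_eq_empty_iff] at hns
      subst hns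
      symm
      apply Finset.sum_eq_zero
      intro i _
      rw [Bcode_of_fixed 1 i (Equiv.Perm.one_apply i), Nat.sub_self]

lemma sor_eq_ctot_Bcode (σ : Equiv.Perm (Fin n)) : sor σ = ctot (Bcode σ) := by
  unfold sor ctot
  apply sorAux_eq n σ
  calc σ.support.card ≤ Fintype.card (Fin n) := Finset.card_le_univ _
  _ = n := Fintype.card_fin n

lemma inv_pow_apply_eq_pow (σ : Equiv.Perm (Fin n)) (k : ℕ) :
    σ⁻¹ ^ k = σ ^ ((orderOf σ - 1) * k) := by
  have ho : 0 < orderOf σ := orderOf_pos σ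
  have h1 : σ⁻¹ = σ ^ (orderOf σ - 1) := by
    apply inv_eq_of_mul_eq_one_right
    rw [← pow_succ']
    rw [show orderOf σ - 1 + 1 = orderOf σ by omega]
    exact pow_orderOf_eq_one σ
  rw [h1, ← pow_mul]

lemma cyc_eq_cmax_Bcode (σ : Equiv.Perm (Fin n)) : cyc σ = (cmaxSet (Bcode σ)).card := by
  unfold cyc CycSet cmaxSet
  congr 1
  apply Finset.filter_congr
  intro i _
  have ho : 0 < orderOf σ := orderOf_pos σ
  constructor
  · intro h
    obtain ⟨k, hk0, hkB, hmin⟩ := Bcode_spec σ i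
    have h1 : (σ⁻¹ ^ k) i = (σ ^ ((orderOf σ - 1) * k)) i := by
      rw [inv_pow_apply_eq_pow]
    have h2 : i ≤ (σ⁻¹ ^ k) i := by
      rw [h1]
      exact h _
    have h3 := Bcode_le σ i
    rw [hkB] at h2
    exact le_antisymm h3 h2
  · intro hB k
    obtain ⟨K, hK0, hKB, hmin⟩ := Bcode_spec σ i
    rw [hB] at hKB
    have hq : ∀ q : ℕ, (σ⁻¹ ^ (K * q)) i = i := by
      intro q
      induction q with
      | zero => simp
      | succ q IHq =>
        rw [show K * (q + 1) = K * q + K by ring, pow_add, Equiv.Perm.mul_apply, hKB, IHq]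
    have hall : ∀ t : ℕ, i ≤ (σ⁻¹ ^ t) i := by
      intro t
      have hdecomp : (σ⁻¹ ^ t) i = (σ⁻¹ ^ (t % K)) i := by
        conv_lhs => rw [show t = t % K + K * (t / K) from (Nat.mod_add_div t K).symm]
        rw [pow_add, Equiv.Perm.mul_apply, hq]
      rw [hdecomp]
      rcases Nat.eq_zero_or_pos (t % K) with hz | hz
      · rw [hz, pow_zero]
        rfl
      · exact (hmin (t % K) hz (Nat.mod_lt t hK0)).le
    have : (σ ^ k) i = (σ⁻¹ ^ ((orderOf σ⁻¹ - 1) * k)) i := by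
      have := inv_pow_apply_eq_pow σ⁻¹ k
      rw [inv_inv] at this
      rw [this]
    rw [this]
    exact hall _

lemma lmic1_eq_cone_Bcode (σ : Equiv.Perm (Fin n)) : lmic1 σ = (coneSet (Bcode σ)).card := by
  unfold lmic1 Lmic1Set Oset coneSet BcodeNat
  congr 1
  apply Finset.filter_congr
  intro i _
  constructor <;> intro h <;> omega

lemma card_filter_le (a : Fin n) :
    (univ.filter (fun j : Fin n => a ≤ j)).card = n - (a : ℕ) := by
  have hset : (univ.filter (fun j : Fin n => a ≤ j)) =
      SDiff.sdiff univ (univ.filter (fun j : Fin n => j < a)) := by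
    ext j
    simp [not_lt]
  rw [hset, Finset.card_sdiff_of_subset (Finset.filter_subset _ _), card_filter_lt, Finset.card_univ,
    Fintype.card_fin]

lemma lmax_eq_clow_Bcode (σ : Equiv.Perm (Fin n)) : lmax σ = (clowSet (Bcode σ)).card := by
  unfold lmax
  congr 1
  ext l
  rw [mem_LmalSet_iff]
  simp only [clowSet, Finset.mem_filter, Finset.mem_univ, true_and]
  constructor
  · intro h
    have hτl : σ⁻¹ l ≤ l := by
      have hmaps : ∀ x ∈ univ.filter (fun j : Fin n => l ≤ j),
          σ⁻¹ x ∈ univ.filter (fun j : Fin n => σ⁻¹ l ≤ j) := by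
        intro x hx
        have hlx := (Finset.mem_filter.mp hx).2
        refine Finset.mem_filter.mpr ⟨Finset.mem_univ _, ?_⟩
        rcases eq_or_lt_of_le hlx with rfl | hlt
        · exact le_refl _
        · exact (h x hlt).le
      have hinj : Set.InjOn (fun x => σ⁻¹ x) (univ.filter (fun j : Fin n => l ≤ j)) := by
        intro a _ b _ hab
        exact σ⁻¹.injective hab
      have hcard := Finset.card_le_card_of_injOn _ hmaps hinj
      rw [card_filter_le, card_filter_le] at hcard
      have h1 : (l : ℕ) < n := l.isLt
      have h2 : ((σ⁻¹ l : Fin n) : ℕ) < n := (σ⁻¹ l).isLt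
      exact Fin.le_def.mpr (by omega)
    have hBl : Bcode σ l = σ⁻¹ l := Bcode_inv_apply σ l hτl
    intro m hm
    obtain ⟨K, hK0, hKB, hKmin⟩ := Bcode_spec σ m
    have hKdec : (σ⁻¹ ^ K) m = σ⁻¹ ((σ⁻¹ ^ (K - 1)) m) := by
      conv_lhs => rw [show K = (K - 1) + 1 by omega]
      rw [pow_succ', Equiv.Perm.mul_apply]
    have hxl : l < (σ⁻¹ ^ (K - 1)) m := by
      rcases Nat.eq_zero_or_pos (K - 1) with hz | hz
      · rw [hz, pow_zero]
        exact hm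
      · exact hm.trans (hKmin (K - 1) hz (by omega))
    have := h _ hxl
    rw [← hKdec, hKB] at this
    rw [hBl]
    exact this
  · intro h m hm
    by_contra hc
    have hml : σ⁻¹ m < σ⁻¹ l :=
      lt_of_le_of_ne (not_lt.mp hc) (fun he => hm.ne' (σ⁻¹.injective he))
    rcases le_or_gt (σ⁻¹ l) l with hτl | hτl
    · have hBl : Bcode σ l = σ⁻¹ l := Bcode_inv_apply σ l hτl
      have hBm : Bcode σ m = σ⁻¹ m := Bcode_inv_apply σ m ((hml.trans (hτl.trans_lt hm)).le)
      have := h m hm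
      rw [hBl, hBm] at this
      exact absurd this (not_lt.mpr hml.le)
    · obtain ⟨K, hK0, hKB, hKmin⟩ := Bcode_spec σ l
      have hK2 : 2 ≤ K := by
        by_contra hK1
        have : K = 1 := by omega
        subst this
        rw [pow_one] at hKB
        have := Bcode_le σ l
        rw [← hKB] at this
        exact absurd hτl (not_lt.mpr this)
      have hKdec : (σ⁻¹ ^ K) l = σ⁻¹ ((σ⁻¹ ^ (K - 1)) l) := by
        conv_lhs => rw [show K = (K - 1) + 1 by omega]
        rw [pow_succ', Equiv.Perm.mul_apply]
      have hxl : l < (σ⁻¹ ^ (K - 1)) l := hKmin (K - 1) (by omega) (by omega)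
      have hBx : Bcode σ ((σ⁻¹ ^ (K - 1)) l) = σ⁻¹ ((σ⁻¹ ^ (K - 1)) l) := by
        apply Bcode_inv_apply
        rw [← hKdec, hKB]
        exact (Bcode_le σ l).trans (le_of_lt hxl)
      have := h _ hxl
      rw [hBx, ← hKdec, hKB] at this
      exact lt_irrefl _ this

lemma eq_one_of_Bcode_fix (τ : Equiv.Perm (Fin n)) (h : ∀ i, Bcode τ i = i) : τ = 1 := by
  by_contra hne
  have hts : τ.support.Nonempty := by
    rw [Finset.nonempty_iff_ne_empty, Ne, Equiv.Perm.support_eq_empty_iff]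
    exact hne
  have h1 := step_Bcode_max τ hts
  rw [h (τ.support.max' hts)] at h1
  have h2 := step_lt τ hts
  rw [← h1] at h2
  exact lt_irrefl _ h2

lemma Bcode_injective : Function.Injective (Bcode (n := n)) := by
  suffices h : ∀ N : ℕ, ∀ σ τ : Equiv.Perm (Fin n), σ.support.card ≤ N →
      Bcode σ = Bcode τ → σ = τ by
    intro σ τ hστ
    exact h σ.support.card σ τ le_rfl hστ
  intro N
  induction N with
  | zero =>
    intro σ τ hσ hB
    have hσ1 : σ = 1 := by
      rw [← Equiv.Perm.support_eq_empty_iff]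
      exact Finset.card_eq_zero.mp (le_antisymm hσ (Nat.zero_le _))
    subst hσ1
    symm
    apply eq_one_of_Bcode_fix
    intro i
    rw [← hB]
    exact Bcode_of_fixed 1 i (Equiv.Perm.one_apply i)
  | succ N IH =>
    intro σ τ hσ hB
    by_cases hss : σ.support.Nonempty
    · have hBσJ : Bcode σ (σ.support.max' hss) < σ.support.max' hss := by
        rw [step_Bcode_max σ hss]
        exact step_lt σ hss
      have hts : τ.support.Nonempty := by
        refine ⟨σ.support.max' hss, support_of_Bcode_lt τ _ ?_⟩
        rw [← hB]
        exact hBσJ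
      have hJστ : σ.support.max' hss = τ.support.max' hts := by
        refine le_antisymm ?_ ?_
        · apply Finset.le_max'
          apply support_of_Bcode_lt τ
          rw [← hB]
          exact hBσJ
        · apply Finset.le_max'
          apply support_of_Bcode_lt σ
          rw [hB]
          rw [step_Bcode_max τ hts]
          exact step_lt τ hts
      have hi : σ⁻¹ (σ.support.max' hss) = τ⁻¹ (τ.support.max' hts) := by
        have h1 := step_Bcode_max σ hss
        have h2 := step_Bcode_max τ hts
        rw [← h1, ← h2, hB, hJστ]
      have hstep : Bcode (σ * Equiv.swap (σ⁻¹ (σ.support.max' hss)) (σ.support.max' hss)) =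
          Bcode (τ * Equiv.swap (σ⁻¹ (σ.support.max' hss)) (σ.support.max' hss)) := by
        funext m
        rcases eq_or_ne m (σ.support.max' hss) with rfl | hm
        · rw [step_Bcode_max' σ hss]
          have := step_Bcode_max' τ hts
          rw [← hi, ← hJστ] at this
          rw [this]
        · rw [step_Bcode_eq σ hss m hm]
          have := step_Bcode_eq τ hts m (by rwa [← hJστ])
          rw [← hi, ← hJστ] at this
          rw [this, hB]
      have hcard : (σ * Equiv.swap (σ⁻¹ (σ.support.max' hss)) (σ.support.max' hss)).support.card
          ≤ N := by
        have h1 := Finset.card_le_card (step_support_subset σ hss)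
        have h2 : (σ.support.erase (σ.support.max' hss)).card < σ.support.card :=
          Finset.card_erase_lt_of_mem (σ.support.max'_mem hss)
        omega
      have heq := IH _ _ hcard hstep
      have h3 := congrArg
        (fun ρ => ρ * Equiv.swap (σ⁻¹ (σ.support.max' hss)) (σ.support.max' hss)) heq
      simpa [mul_assoc, Equiv.swap_mul_self] using h3
    · have hσ1 : σ = 1 := by
        rw [← Equiv.Perm.support_eq_empty_iff]
        exact Finset.not_nonempty_iff_eq_empty.mp hss
      subst hσ1
      symm
      apply eq_one_of_Bcode_fix
      intro i
      rw [← hB]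
      exact Bcode_of_fixed 1 i (Equiv.Perm.one_apply i)

lemma Bcode_mem_CS (σ : Equiv.Perm (Fin n)) : Bcode σ ∈ CS :=
  Finset.mem_filter.mpr ⟨Finset.mem_univ _, fun i => Bcode_le σ i⟩

/-! ### counting -/

lemma image_eq_CS {g : Equiv.Perm (Fin n) → (Fin n → Fin n)} (hg : Function.Injective g)
    (hmem : ∀ σ, g σ ∈ CS) : univ.image g = CS := by
  apply Finset.eq_of_subset_of_card_le
  · intro f hf
    rcases Finset.mem_image.mp hf with ⟨σ, -, rfl⟩
    exact hmem σ
  · rw [Finset.card_image_of_injective _ hg, card_CS, Finset.card_univ, Fintype.card_perm,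
      Fintype.card_fin]

lemma transfer {g : Equiv.Perm (Fin n) → (Fin n → Fin n)} (hg : Function.Injective g)
    (hmem : ∀ σ, g σ ∈ CS) (P : Equiv.Perm (Fin n) → Prop) [DecidablePred P]
    (Q : (Fin n → Fin n) → Prop) [DecidablePred Q]
    (hPQ : ∀ σ, P σ ↔ Q (g σ)) :
    (univ.filter P).card = (CS.filter Q).card := by
  have him := image_eq_CS hg hmem
  rw [← Finset.card_image_of_injective (univ.filter P) hg]
  congr 1
  ext f
  constructor
  · intro hf
    rcases Finset.mem_image.mp hf with ⟨σ, hσ, rfl⟩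
    have hP := (Finset.mem_filter.mp hσ).2
    refine Finset.mem_filter.mpr ⟨?_, (hPQ σ).mp hP⟩
    rw [← him]; exact Finset.mem_image_of_mem _ (Finset.mem_univ σ)
  · intro hf
    have hfCS := (Finset.mem_filter.mp hf).1
    have hQ := (Finset.mem_filter.mp hf).2
    rw [← him] at hfCS
    rcases Finset.mem_image.mp hfCS with ⟨σ, -, rfl⟩
    exact Finset.mem_image_of_mem _ (Finset.mem_filter.mpr ⟨Finset.mem_univ σ, (hPQ σ).mpr hQ⟩)

end

end SortIdx
/-- Theorem 1.3(2), equidistribution part.  The quadruples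
`(inv, rmin, lmax, lmin)` and `(sor, cyc, lmax, lmic₁)` have the same joint
distribution on `Sₙ`. -/
theorem quadruple_equidistributed (n : ℕ) (hn : 1 ≤ n) (a b c d : ℕ) :
    Nat.card {σ : Equiv.Perm (Fin n) //
        SortIdx.inv σ = a ∧ SortIdx.rmin σ = b ∧ SortIdx.lmax σ = c ∧ SortIdx.lmin σ = d} =
      Nat.card {σ : Equiv.Perm (Fin n) //
        SortIdx.sor σ = a ∧ SortIdx.cyc σ = b ∧ SortIdx.lmax σ = c ∧ SortIdx.lmic1 σ = d} := by
  rw [Nat.card_eq_fintype_card, Nat.card_eq_fintype_card, Fintype.card_subtype,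
    Fintype.card_subtype]
  rw [SortIdx.transfer SortIdx.Amap_injective SortIdx.Amap_mem_CS _
      (fun f => SortIdx.ctot f = a ∧ (SortIdx.cmaxSet f).card = b ∧
        (SortIdx.clowSet f).card = c ∧ (SortIdx.coneSet f).card = d)
      (fun σ => by
        rw [SortIdx.inv_eq_ctot_Amap, SortIdx.rmin_eq_cmax_Amap, SortIdx.lmax_eq_clow_Amap,
          SortIdx.lmin_eq_cone_Amap]),
    SortIdx.transfer SortIdx.Bcode_injective SortIdx.Bcode_mem_CS _
      (fun f => SortIdx.ctot f = a ∧ (SortIdx.cmaxSet f).card = b ∧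
        (SortIdx.clowSet f).card = c ∧ (SortIdx.coneSet f).card = d)
      (fun σ => by
        rw [SortIdx.sor_eq_ctot_Bcode, SortIdx.cyc_eq_cmax_Bcode, SortIdx.lmax_eq_clow_Bcode,
          SortIdx.lmic1_eq_cone_Bcode])]
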